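/- A sum over a finite abelian group of products of nontrivial characters is Galois-invariant and hence rational: if ζ is a primitive q-th root of unity, then Σ_{j=1}^{q-1} 1/((1−ζ^j)(1−ζ^{-j})) = (q−1)(q−5)/12 + (q−1)/2, i.e., equals (q²−1)/12. -/
import Mathlib

open Finset

private lemma aux_geom_deriv (z : ℂ) (n : ℕ) :
    (1 - z) * ∑ k ∈ range n, (k : ℂ) * z ^ k =
      (∑ k ∈ range n, z ^ k) - 1 - ((n : ℂ) - 1) * z ^ n := by
  induction n with
  | zero => simp
  | succ n ih =>
    rw [sum_range_succ, sum_range_succ, mul_add, ih]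
    push_cast
    ring

private lemma aux_inv (q : ℕ) (hq : 2 ≤ q) (z : ℂ) (hz : z ^ q = 1) (h1 : z ≠ 1) :
    1 / (1 - z) = -(∑ k ∈ range q, (k : ℂ) * z ^ k) / q := by
  have hz0 : (1 : ℂ) - z ≠ 0 := sub_ne_zero_of_ne (Ne.symm h1)
  have hq0 : (q : ℂ) ≠ 0 := Nat.cast_ne_zero.mpr (by omega)
  have hgeom : ∑ k ∈ range q, z ^ k = 0 := by
    rw [geom_sum_eq h1, hz, sub_self, zero_div]
  have key : (1 - z) * ∑ k ∈ range q, (k : ℂ) * z ^ k = -(q : ℂ) := by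
    rw [aux_geom_deriv, hgeom, hz]; ring
  field_simp
  linear_combination key

private lemma sum_id' (n : ℕ) : ∑ k ∈ range n, (k : ℂ) = n * (n - 1) / 2 := by
  induction n with
  | zero => simp
  | succ n ih => rw [sum_range_succ, ih]; push_cast; ring

private lemma sum_sq' (n : ℕ) : ∑ k ∈ range n, (k : ℂ) ^ 2 = n * (n - 1) * (2 * n - 1) / 6 := by
  induction n with
  | zero => simp
  | succ n ih => rw [sum_range_succ, ih]; push_cast; ring

private lemma orth (q : ℕ) (hq : 2 ≤ q) (ζ : ℂ) (hζ : IsPrimitiveRoot ζ q)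
    (k m : ℕ) (hk : k < q) (hm : m < q) :
    ∑ j ∈ range q, ζ ^ (j * k) * (ζ ^ (j * m))⁻¹ = if k = m then (q : ℂ) else 0 := by
  have hζ0 : ζ ≠ 0 := hζ.ne_zero (by omega)
  have hrw : ∀ j, ζ ^ (j * k) * (ζ ^ (j * m))⁻¹ = (ζ ^ k * (ζ ^ m)⁻¹) ^ j := by
    intro j
    rw [mul_pow, inv_pow, ← pow_mul, ← pow_mul, mul_comm k j, mul_comm m j]
  simp only [hrw]
  by_cases hkm : k = m
  · subst hkm
    rw [mul_inv_cancel₀ (pow_ne_zero _ hζ0)]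
    simp
  · have hw1 : ζ ^ k * (ζ ^ m)⁻¹ ≠ 1 := by
      intro h
      apply hkm
      have hmm : ζ ^ m ≠ 0 := pow_ne_zero _ hζ0
      have : ζ ^ k = ζ ^ m := by
        field_simp at h
        exact h
      exact hζ.pow_inj hk hm this
    have hwq : (ζ ^ k * (ζ ^ m)⁻¹) ^ q = 1 := by
      rw [mul_pow, inv_pow, ← pow_mul, ← pow_mul, mul_comm k q, mul_comm m q,
        pow_mul, pow_mul, hζ.pow_eq_one]
      simp
    rw [if_neg hkm, geom_sum_eq hw1, hwq, sub_self, zero_div]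
/-- For `ζ` a primitive `q`-th root of unity (`q ≥ 2`), the Galois-invariant sum
`Σ_{j=1}^{q-1} 1/((1−ζʲ)(1−ζ^{−j}))` is rational and equals `(q²−1)/12`. -/
theorem sum_one_div_norm_one_sub_primitive_root (q : ℕ) (hq : 2 ≤ q) (ζ : ℂ)
    (hζ : IsPrimitiveRoot ζ q) :
    ∑ j ∈ Ico 1 q, 1 / ((1 - ζ ^ j) * (1 - (ζ ^ j)⁻¹)) =
      ((q : ℂ) ^ 2 - 1) / 12 := by
  have hq0 : (q : ℂ) ≠ 0 := Nat.cast_ne_zero.mpr (by omega)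
  have hζ0 : ζ ≠ 0 := hζ.ne_zero (by omega)
  set g : ℕ → ℂ := fun j => ∑ k ∈ range q, (k : ℂ) * ζ ^ (j * k) with hg
  set h : ℕ → ℂ := fun j => ∑ m ∈ range q, (m : ℂ) * (ζ ^ (j * m))⁻¹ with hh
  -- Step 1: each term equals g j * h j / q²
  have step1 : ∀ j ∈ Ico 1 q,
      1 / ((1 - ζ ^ j) * (1 - (ζ ^ j)⁻¹)) = g j * h j / q ^ 2 := by
    intro j hj
    rw [mem_Ico] at hj
    have hz1 : ζ ^ j ≠ 1 := hζ.pow_ne_one_of_pos_of_lt (by omega) hj.2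
    have hzq : (ζ ^ j) ^ q = 1 := by
      rw [← pow_mul, mul_comm, pow_mul, hζ.pow_eq_one, one_pow]
    have hz0 : ζ ^ j ≠ 0 := pow_ne_zero _ hζ0
    have hinv1 : (ζ ^ j)⁻¹ ≠ 1 := by
      rw [ne_eq, inv_eq_one]; exact hz1
    have hinvq : ((ζ ^ j)⁻¹) ^ q = 1 := by
      rw [inv_pow, hzq, inv_one]
    have e1 : 1 / (1 - ζ ^ j) = -(g j) / q := by
      rw [aux_inv q hq _ hzq hz1, hg]
      congr 2
      exact Finset.sum_congr rfl fun k _ => by rw [← pow_mul]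
    have e2 : 1 / (1 - (ζ ^ j)⁻¹) = -(h j) / q := by
      rw [aux_inv q hq _ hinvq hinv1, hh]
      congr 2
      exact Finset.sum_congr rfl fun m _ => by rw [inv_pow, ← pow_mul]
    rw [show (1 : ℂ) / ((1 - ζ ^ j) * (1 - (ζ ^ j)⁻¹)) =
        (1 / (1 - ζ ^ j)) * (1 / (1 - (ζ ^ j)⁻¹)) by
      rw [div_mul_div_comm, one_mul], e1, e2]
    ring
  rw [Finset.sum_congr rfl step1, ← Finset.sum_div]
  -- Step 2: full orthogonality sum
  have step2 : ∑ j ∈ range q, g j * h j = q * ∑ k ∈ range q, (k : ℂ) ^ 2 := by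
    have expand : ∀ j, g j * h j =
        ∑ k ∈ range q, ∑ m ∈ range q,
          ((k : ℂ) * m) * (ζ ^ (j * k) * (ζ ^ (j * m))⁻¹) := by
      intro j
      rw [hg, hh, Finset.sum_mul_sum]
      exact Finset.sum_congr rfl fun k _ =>
        Finset.sum_congr rfl fun m _ => by ring
    simp only [expand]
    rw [Finset.sum_comm]
    have inner : ∀ k ∈ range q,
        (∑ j ∈ range q, ∑ m ∈ range q,
          ((k : ℂ) * m) * (ζ ^ (j * k) * (ζ ^ (j * m))⁻¹)) = (k : ℂ) ^ 2 * q := by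
      intro k hk
      rw [Finset.sum_comm]
      have hk' := mem_range.mp hk
      have : ∀ m ∈ range q,
          (∑ j ∈ range q, ((k : ℂ) * m) * (ζ ^ (j * k) * (ζ ^ (j * m))⁻¹)) =
            if k = m then (k : ℂ) * m * q else 0 := by
        intro m hm
        rw [← Finset.mul_sum, orth q hq ζ hζ k m hk' (mem_range.mp hm)]
        split_ifs with hkm
        · ring
        · ring
      rw [Finset.sum_congr rfl this, Finset.sum_ite_eq (range q) k
        (fun m => (k : ℂ) * m * q), if_pos hk]
      ring
    rw [Finset.sum_congr rfl inner, ← Finset.sum_mul]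
    ring
  -- Step 3: split off j = 0
  have split : ∑ j ∈ range q, g j * h j = g 0 * h 0 + ∑ j ∈ Ico 1 q, g j * h j := by
    rw [range_eq_Ico, Finset.sum_eq_sum_Ico_succ_bot (by omega : 0 < q)]
  have g0 : g 0 = ∑ k ∈ range q, (k : ℂ) := by
    rw [hg]; exact Finset.sum_congr rfl fun k _ => by simp
  have h0 : h 0 = ∑ k ∈ range q, (k : ℂ) := by
    rw [hh]; exact Finset.sum_congr rfl fun k _ => by simp
  have main : ∑ j ∈ Ico 1 q, g j * h j =
      q * (∑ k ∈ range q, (k : ℂ) ^ 2) - (∑ k ∈ range q, (k : ℂ)) ^ 2 := by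
    rw [← step2, split, g0, h0]; ring
  rw [main, sum_id' q, sum_sq' q]
  field_simp
  ring
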